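/- Let a, b > 0 and n > a+b. Let A ⊆ C([n],a) and B ⊆ C([n],b) be cross-intersecting families. If b < a, or if b ≥ a and |B| ≤ C(n−b−1+a, a−1), then |A| + |B| ≤ C(n,a); moreover, this inequality is strict unless |B| = 0. -/

import Mathlib

attribute [-instance] instDecidableEqFin

/-- Two families are cross-intersecting if every member of the first intersects
every member of the second. -/
def CrossIntersecting (A B : Finset (Finset ℕ)) : Prop :=
  ∀ X ∈ A, ∀ Y ∈ B, (X ∩ Y).Nonempty

namespace CrossHelper

open Finset Finset.Colex

variable {α : Type*} [DecidableEq α]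

/-- Local LYM-type double counting with an explicit ground set. -/
lemma lym_step (V : Finset α) (j : ℕ) (hj : 0 < j) (𝒢 : Finset (Finset α))
    (hG : ∀ X ∈ 𝒢, X ⊆ V ∧ X.card = j) :
    𝒢.card * j ≤ (Finset.shadow 𝒢).card * (V.card + 1 - j) := by
  classical
  refine Finset.card_mul_le_card_mul (fun X S => S ⊆ X) ?_ ?_
  · intro X hX
    obtain ⟨hXV, hXj⟩ := hG X hX
    have hsub : X.image (fun x => X.erase x) ⊆
        (Finset.shadow 𝒢).bipartiteAbove (fun X S => S ⊆ X) X := by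
      intro S hS
      simp only [mem_image] at hS
      obtain ⟨x, hx, rfl⟩ := hS
      refine (mem_bipartiteAbove _).2 ⟨?_, erase_subset _ _⟩
      rw [mem_shadow_iff]
      exact ⟨X, hX, x, hx, rfl⟩
    have hcard : (X.image (fun x => X.erase x)).card = j := by
      rw [Finset.card_image_of_injOn (fun x hx y hy h => Finset.erase_injOn X hx hy h), hXj]
    calc j = (X.image (fun x => X.erase x)).card := hcard.symm
    _ ≤ _ := card_le_card hsub
  · intro S hS
    obtain ⟨X₀, hX₀, x₀, hx₀, hSX₀⟩ := mem_shadow_iff.1 hS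
    have hScard : S.card = j - 1 := by
      subst hSX₀; rw [card_erase_of_mem hx₀, (hG X₀ hX₀).2]
    have hSV : S ⊆ V := by
      subst hSX₀; exact (erase_subset _ _).trans (hG X₀ hX₀).1
    have hjV : j ≤ V.card := by
      rw [← (hG X₀ hX₀).2]; exact card_le_card (hG X₀ hX₀).1
    have hsub : 𝒢.bipartiteBelow (fun X S => S ⊆ X) S ⊆ (V \ S).image (fun v => insert v S) := by
      intro X hX
      obtain ⟨hXG, hSX⟩ := (mem_bipartiteBelow _).1 hX
      obtain ⟨hXV, hXj⟩ := hG X hXG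
      have h1 : (X \ S).card = 1 := by
        rw [card_sdiff_of_subset hSX, hXj, hScard]; omega
      obtain ⟨v, hv⟩ := Finset.card_eq_one.1 h1
      have hvX : v ∈ X ∧ v ∉ S := by
        have : v ∈ X \ S := hv ▸ Finset.mem_singleton_self v
        exact ⟨(mem_sdiff.1 this).1, (mem_sdiff.1 this).2⟩
      refine mem_image.2 ⟨v, mem_sdiff.2 ⟨hXV hvX.1, hvX.2⟩, ?_⟩
      apply Finset.Subset.antisymm
      · exact insert_subset hvX.1 hSX
      · intro y hy
        by_cases hyS : y ∈ S
        · exact mem_insert_of_mem hyS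
        · have : y ∈ X \ S := mem_sdiff.2 ⟨hy, hyS⟩
          rw [hv, Finset.mem_singleton] at this
          exact this ▸ mem_insert_self _ _
    calc (𝒢.bipartiteBelow (fun X S => S ⊆ X) S).card
        ≤ ((V \ S).image (fun v => insert v S)).card := card_le_card hsub
      _ ≤ (V \ S).card := card_image_le
      _ = V.card - (j - 1) := by rw [card_sdiff_of_subset hSV, hScard]
      _ ≤ V.card + 1 - j := by omega

lemma sizedIn_shadow_iterate (V : Finset α) (k t : ℕ) (𝒢 : Finset (Finset α))
    (hG : ∀ X ∈ 𝒢, X ⊆ V ∧ X.card = k) :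
    ∀ S ∈ (Finset.shadow)^[t] 𝒢, S ⊆ V ∧ S.card = k - t := by
  intro S hS
  obtain ⟨X, hX, hSX, hcard⟩ := Finset.mem_shadow_iterate_iff_exists_sdiff.1 hS
  obtain ⟨hXV, hXk⟩ := hG X hX
  have h1 : (X \ S).card = X.card - S.card := card_sdiff_of_subset hSX
  have h2 : S.card ≤ X.card := card_le_card hSX
  exact ⟨hSX.trans hXV, by omega⟩

lemma lym_iter (V : Finset α) (k : ℕ) (hk : k ≤ V.card) (𝒢 : Finset (Finset α))
    (hG : ∀ X ∈ 𝒢, X ⊆ V ∧ X.card = k) :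
    ∀ t, t ≤ k →
      𝒢.card * (V.card.choose (k - t)) ≤ ((Finset.shadow)^[t] 𝒢).card * V.card.choose k := by
  intro t
  induction t with
  | zero => intro _; simp
  | succ t ih =>
    intro ht
    have ht' : t ≤ k := by omega
    have IH := ih ht'
    set N := V.card with hN
    set j := k - t with hj
    have hj1 : 1 ≤ j := by omega
    have hjN : j ≤ N := by omega
    set H := (Finset.shadow)^[t] 𝒢 with hH
    have hHsized : ∀ S ∈ H, S ⊆ V ∧ S.card = j := sizedIn_shadow_iterate V k t 𝒢 hG
    have lym := lym_step V j hj1 H hHsized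
    have hiter : (Finset.shadow)^[t+1] 𝒢 = Finset.shadow H := by
      rw [hH, Function.iterate_succ_apply']
    have hid : N.choose j * j = N.choose (j - 1) * (N + 1 - j) := by
      have := Nat.choose_succ_right_eq N (j - 1)
      have hjj : j - 1 + 1 = j := by omega
      rw [hjj] at this
      rw [this]
      congr 1
      omega
    have hsub : k - (t + 1) = j - 1 := by omega
    rw [hiter, hsub]
    have step1 : 𝒢.card * N.choose (j-1) * (N + 1 - j) = 𝒢.card * N.choose j * j := by
      rw [Nat.mul_assoc, Nat.mul_assoc, ← hid]
    have step2 : 𝒢.card * N.choose j * j ≤ H.card * N.choose k * j :=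
      Nat.mul_le_mul_right _ IH
    have step3 : H.card * N.choose k * j = (H.card * j) * N.choose k := by ring
    have step4 : (H.card * j) * N.choose k ≤ ((Finset.shadow H).card * (N + 1 - j)) * N.choose k :=
      Nat.mul_le_mul_right _ lym
    have step5 : ((Finset.shadow H).card * (N + 1 - j)) * N.choose k
        = ((Finset.shadow H).card * N.choose k) * (N + 1 - j) := by ring
    have final : 𝒢.card * N.choose (j-1) * (N + 1 - j)
        ≤ ((Finset.shadow H).card * N.choose k) * (N + 1 - j) := by
      rw [step1, ← step5]; exact step2.trans (step3 ▸ step4)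
    have hpos : 0 < N + 1 - j := by omega
    exact Nat.le_of_mul_le_mul_right final hpos

lemma shadow_grow (V : Finset α) (k a : ℕ) (hak : a < k) (hk : k ≤ V.card)
    (hc : V.card.choose k < V.card.choose a) (𝒢 : Finset (Finset α))
    (hG : ∀ X ∈ 𝒢, X ⊆ V ∧ X.card = k) (hne : 𝒢.Nonempty) :
    𝒢.card < ((Finset.shadow)^[k - a] 𝒢).card := by
  have h := lym_iter V k hk 𝒢 hG (k - a) (by omega)
  have hka : k - (k - a) = a := by omega
  rw [hka] at h
  have hGpos : 0 < 𝒢.card := card_pos.2 hne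
  have h2 : 𝒢.card * V.card.choose k < 𝒢.card * V.card.choose a :=
    (Nat.mul_lt_mul_left hGpos).2 hc
  have h3 : 𝒢.card * V.card.choose k < ((Finset.shadow)^[k - a] 𝒢).card * V.card.choose k :=
    h2.trans_le h
  have hpos : 0 < V.card.choose k := Nat.choose_pos hk
  exact Nat.lt_of_mul_lt_mul_right h3

lemma choose_lt_succ (n r : ℕ) (h : r + 1 ≤ n / 2) : n.choose r < n.choose (r + 1) := by
  have hid := Nat.choose_succ_right_eq n r
  have hrn : r ≤ n := by omega
  have hpos : 0 < n.choose r := Nat.choose_pos hrn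
  have key : n.choose r * (r + 1) < n.choose (r + 1) * (r + 1) := by
    rw [hid]
    calc n.choose r * (r + 1) < n.choose r * (r + 2) := (Nat.mul_lt_mul_left hpos).2 (by omega)
      _ ≤ n.choose r * (n - r) := Nat.mul_le_mul_left _ (by omega)
  exact Nat.lt_of_mul_lt_mul_right key

lemma choose_lt_of_le_half (n : ℕ) : ∀ s r, r < s → s ≤ n / 2 → n.choose r < n.choose s := by
  intro s
  induction s with
  | zero => intro r hr _; omega
  | succ s ih =>
    intro r hr hs
    rcases Nat.lt_or_ge r s with h | h
    · exact (ih r h (by omega)).trans (choose_lt_succ n s hs)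
    · have : r = s := by omega
      subst this
      exact choose_lt_succ n r hs

lemma choose_lt_choose_of (n a b : ℕ) (hba : b < a) (hn : a + b < n) :
    n.choose b < n.choose a := by
  rcases le_or_gt (2 * a) n with h | h
  · exact choose_lt_of_le_half n a b hba (by omega)
  · have h2 : n.choose b < n.choose (n - a) :=
      choose_lt_of_le_half n (n - a) b (by omega) (by omega)
    rwa [Nat.choose_symm (by omega)] at h2

lemma exists_lowerset {β : Type*} [LinearOrder β] (Q : Finset β) :
    ∀ s, s ≤ Q.card → ∃ T, T ⊆ Q ∧ T.card = s ∧ ∀ x ∈ T, ∀ y ∈ Q, y ≤ x → y ∈ T := by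
  intro s
  induction s with
  | zero => exact fun _ => ⟨∅, empty_subset _, rfl, by simp⟩
  | succ m ih =>
    intro hm
    obtain ⟨T, hTQ, hTc, hTl⟩ := ih (by omega)
    have hne : (Q \ T).Nonempty := by
      rw [← card_pos, card_sdiff_of_subset hTQ]; omega
    set x := (Q \ T).min' hne with hx
    have hxQ : x ∈ Q \ T := min'_mem _ _
    refine ⟨insert x T, insert_subset (mem_sdiff.1 hxQ).1 hTQ, ?_, ?_⟩
    · rw [card_insert_of_notMem (mem_sdiff.1 hxQ).2, hTc]
    · intro z hz y hy hyz
      rcases mem_insert.1 hz with hzx | hzT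
      · by_cases hyT : y ∈ T
        · exact mem_insert_of_mem hyT
        · have h1 : x ≤ y := min'_le _ _ (mem_sdiff.2 ⟨hy, hyT⟩)
          have : y = x := le_antisymm (hzx ▸ hyz) h1
          exact this ▸ mem_insert_self _ _
      · exact mem_insert_of_mem (hTl z hzT y hy hyz)

lemma core2 (n k a : ℕ) (ha : 0 < a) (hak : a < k) (hmn : k + a - 1 ≤ n)
    (𝒢 : Finset (Finset (Fin n))) (hG : (𝒢 : Set (Finset (Fin n))).Sized k)
    (hne : 𝒢.Nonempty) (hGc : 𝒢.card ≤ (k + a - 1).choose k) :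
    𝒢.card < ((Finset.shadow)^[k - a] 𝒢).card := by
  classical
  set m := k + a - 1 with hm
  have hkn : k ≤ n := by omega
  have hkm : k ≤ m := by omega
  have hWbound : ∀ x ∈ Finset.range m, x < n := fun x hx => by
    rw [mem_range] at hx; omega
  set W : Finset (Fin n) := (Finset.range m).attachFin hWbound with hW
  have hWcard : W.card = m := by rw [hW, card_attachFin, card_range]
  set P : Finset (Finset (Fin n)) := powersetCard k (univ : Finset (Fin n)) with hP
  have hPcard : P.card = n.choose k := by
    rw [hP, card_powersetCard, card_univ, Fintype.card_fin]
  set Q : Finset (Colex (Finset (Fin n))) := P.image toColex with hQ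
  have hQcard : Q.card = n.choose k := by
    rw [hQ, card_image_of_injective _ toColex.injective, hPcard]
  set s := 𝒢.card with hs
  have hs1 : 1 ≤ s := Finset.card_pos.2 hne
  have hsQ : s ≤ Q.card := by
    rw [hQcard]
    exact hGc.trans (Nat.choose_le_choose k hmn)
  obtain ⟨T, hTQ, hTc, hTlow⟩ := exists_lowerset Q s hsQ
  set 𝒞 : Finset (Finset (Fin n)) := T.image ofColex with hC
  have hmemC : ∀ X : Finset (Fin n), X ∈ 𝒞 ↔ toColex X ∈ T := by
    intro X
    constructor
    · rintro hX
      obtain ⟨t, ht, rfl⟩ := mem_image.1 hX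
      simpa using ht
    · intro hX
      exact mem_image.2 ⟨toColex X, hX, rfl⟩
  have hCP : 𝒞 ⊆ P := by
    intro X hX
    have := hTQ ((hmemC X).1 hX)
    obtain ⟨Y, hY, hYX⟩ := mem_image.1 this
    rwa [← toColex_inj.1 hYX]
  have hCcard : 𝒞.card = s := by
    rw [hC, card_image_of_injective _ ofColex.injective, hTc]
  have hCsized : (𝒞 : Set (Finset (Fin n))).Sized k := fun X hX =>
    (mem_powersetCard.1 (hCP hX)).2
  have hInit : IsInitSeg 𝒞 k := by
    refine ⟨hCsized, ?_⟩
    rintro X Y hX ⟨hlt, hYcard⟩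
    have hYP : Y ∈ P := mem_powersetCard.2 ⟨subset_univ _, hYcard⟩
    have hYQ : toColex Y ∈ Q := mem_image_of_mem _ hYP
    exact (hmemC Y).2 (hTlow (toColex X) ((hmemC X).1 hX) (toColex Y) hYQ hlt.le)
  have hCW : ∀ X ∈ 𝒞, X ⊆ W := by
    by_contra hcon
    push_neg at hcon
    obtain ⟨X, hX, hXnsub⟩ := hcon
    obtain ⟨v, hvX, hvW⟩ := Finset.not_subset.1 hXnsub
    have hvm : m ≤ (v : ℕ) := by
      by_contra hlt
      exact hvW ((mem_attachFin _).2 (mem_range.2 (by omega)))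
    have hsubC : powersetCard k W ⊆ 𝒞 := by
      intro Y hY
      obtain ⟨hYW, hYk⟩ := mem_powersetCard.1 hY
      have hYmem : ∀ y ∈ Y, (y : ℕ) < m := fun y hy =>
        mem_range.1 ((mem_attachFin _).1 (hYW hy))
      have hvY : v ∉ Y := fun h => by have := hYmem v h; omega
      have hlt : toColex Y < toColex X := by
        refine toColex_lt_toColex_iff_exists_forall_lt.2 ⟨v, hvX, hvY, ?_⟩
        intro b hb _
        have := hYmem b hb
        exact Fin.lt_def.2 (by omega)
      exact hInit.2 hX ⟨hlt, hYk⟩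
    have hXnW : X ∉ powersetCard k W := by
      intro h
      exact hvW ((mem_powersetCard.1 h).1 hvX)
    have hcard2 : m.choose k + 1 ≤ s := by
      calc m.choose k + 1 = (powersetCard k W).card + 1 := by
            rw [card_powersetCard, hWcard]
        _ = (insert X (powersetCard k W)).card := (card_insert_of_notMem hXnW).symm
        _ ≤ 𝒞.card := card_le_card (insert_subset hX hsubC)
        _ = s := hCcard
    omega
  have hchoose : m.choose k < m.choose a := by
    have hsymm : m.choose a = m.choose (k - 1) := by
      have h1 : m - (k - 1) = a := by omega
      have := Nat.choose_symm (show k - 1 ≤ m by omega)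
      rw [h1] at this
      exact this
    have hid := Nat.choose_succ_right_eq m (k - 1)
    have hk1 : k - 1 + 1 = k := by omega
    have hma : m - (k - 1) = a := by omega
    rw [hk1, hma] at hid
    have hcpos : 0 < m.choose (k - 1) := Nat.choose_pos (by omega)
    rw [hsymm]
    refine Nat.lt_of_not_le fun hle => ?_
    have h2 : m.choose (k - 1) * k ≤ m.choose k * k := Nat.mul_le_mul_right _ hle
    rw [hid] at h2
    have h3 : k ≤ a := Nat.le_of_mul_le_mul_left (by linarith [h2]) hcpos
    omega
  have hCgrow : 𝒞.card < ((Finset.shadow)^[k - a] 𝒞).card := by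
    refine shadow_grow W k a hak (by omega) (by rw [hWcard]; exact hchoose) 𝒞 ?_ ?_
    · exact fun X hX => ⟨hCW X hX, hCsized hX⟩
    · rw [← Finset.card_pos, hCcard]; omega
  have hKK : ((Finset.shadow)^[k - a] 𝒞).card ≤ ((Finset.shadow)^[k - a] 𝒢).card :=
    Finset.iterated_kk hG (by omega) hInit
  omega

lemma core2N (n k a : ℕ) (ha : 0 < a) (hak : a < k) (hmn : k + a - 1 ≤ n)
    (𝒢 : Finset (Finset ℕ)) (hG : ∀ X ∈ 𝒢, X ⊆ Finset.Icc 1 n ∧ X.card = k)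
    (hne : 𝒢.Nonempty) (hGc : 𝒢.card ≤ (k + a - 1).choose k) :
    𝒢.card < ((Finset.shadow)^[k - a] 𝒢).card := by
  classical
  have hn0 : 0 < n := by omega
  set g : ℕ → Fin n := fun x => ⟨(x - 1) % n, Nat.mod_lt _ hn0⟩ with hg
  set e : Fin n → ℕ := fun i => (i : ℕ) + 1 with he
  have he_inj : Function.Injective e := by
    intro i j h
    simp only [he] at h
    exact Fin.ext (by omega)
  have heg : ∀ x ∈ Finset.Icc 1 n, e (g x) = x := by
    intro x hx
    rw [Finset.mem_Icc] at hx
    simp only [hg, he]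
    rw [Nat.mod_eq_of_lt (by omega)]
    omega
  have himg : ∀ X : Finset ℕ, X ⊆ Finset.Icc 1 n → (X.image g).image e = X := by
    intro X hX
    rw [Finset.image_image]
    have hEq : ∀ x ∈ X, (e ∘ g) x = id x := fun x hx => heg x (hX hx)
    rw [Finset.image_congr hEq, Finset.image_id]
  have hcardim : ∀ X : Finset ℕ, X ⊆ Finset.Icc 1 n → (X.image g).card = X.card := by
    intro X hX
    refine le_antisymm card_image_le ?_
    conv_lhs => rw [← himg X hX]
    exact card_image_le
  set 𝒢' : Finset (Finset (Fin n)) := 𝒢.image (fun X => X.image g) with hG'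
  have hG'card : 𝒢'.card = 𝒢.card := by
    rw [hG']
    apply card_image_of_injOn
    intro X hX Y hY hXY
    have := congrArg (Finset.image e) hXY
    rwa [himg X (hG X hX).1, himg Y (hG Y hY).1] at this
  have hG'sized : (𝒢' : Set (Finset (Fin n))).Sized k := by
    rintro X' hX'
    rw [Finset.mem_coe, hG', mem_image] at hX'
    obtain ⟨X, hX, rfl⟩ := hX'
    rw [hcardim X (hG X hX).1]
    exact (hG X hX).2
  have hG'ne : 𝒢'.Nonempty := hne.image _
  have hG'c : 𝒢'.card ≤ (k + a - 1).choose k := by rw [hG'card]; exact hGc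
  have hcore := core2 n k a ha hak hmn 𝒢' hG'sized hG'ne hG'c
  -- transfer the shadow bound back
  have hsub : ((Finset.shadow)^[k - a] 𝒢').image (fun S => S.image e)
      ⊆ (Finset.shadow)^[k - a] 𝒢 := by
    intro S'' hS''
    obtain ⟨S', hS', rfl⟩ := mem_image.1 hS''
    obtain ⟨C', hC', hSC', hCS'⟩ := Finset.mem_shadow_iterate_iff_exists_sdiff.1 hS'
    rw [hG', mem_image] at hC'
    obtain ⟨X, hX, rfl⟩ := hC'
    obtain ⟨hXI, hXk⟩ := hG X hX
    have hC'card : (X.image g).card = k := by rw [hcardim X hXI]; exact hXk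
    have hS'card : S'.card = k - (k - a) := by
      have h1 : (X.image g \ S').card = (X.image g).card - S'.card := card_sdiff_of_subset hSC'
      have h2 : S'.card ≤ (X.image g).card := card_le_card hSC'
      omega
    refine Finset.mem_shadow_iterate_iff_exists_sdiff.2 ⟨X, hX, ?_, ?_⟩
    · intro y hy
      obtain ⟨i, hi, rfl⟩ := mem_image.1 hy
      have : e i ∈ (X.image g).image e := mem_image_of_mem _ (hSC' hi)
      rwa [himg X hXI] at this
    · have hsub2 : S'.image e ⊆ X := by
        intro y hy
        obtain ⟨i, hi, rfl⟩ := mem_image.1 hy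
        have : e i ∈ (X.image g).image e := mem_image_of_mem _ (hSC' hi)
        rwa [himg X hXI] at this
      rw [card_sdiff_of_subset hsub2, Finset.card_image_of_injective _ he_inj, hS'card, hXk]
      omega
  have hcard3 : ((Finset.shadow)^[k - a] 𝒢').card ≤ ((Finset.shadow)^[k - a] 𝒢).card := by
    calc ((Finset.shadow)^[k - a] 𝒢').card
        = (((Finset.shadow)^[k - a] 𝒢').image (fun S => S.image e)).card :=
          (Finset.card_image_of_injective _ (Finset.image_injective he_inj)).symm
      _ ≤ _ := card_le_card hsub
  omega

end CrossHelper

open Finset CrossHelper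

theorem stmt12 (n a b : ℕ) (ha : 0 < a) (hb : 0 < b) (hn : a + b < n)
    (A B : Finset (Finset ℕ))
    (hA : A ⊆ Finset.powersetCard a (Finset.Icc 1 n))
    (hB : B ⊆ Finset.powersetCard b (Finset.Icc 1 n))
    (hcross : CrossIntersecting A B)
    (hcond : b < a ∨ (a ≤ b ∧ B.card ≤ (n - b - 1 + a).choose (a - 1))) :
    A.card + B.card ≤ n.choose a ∧
      (B.card ≠ 0 → A.card + B.card < n.choose a) := by
  classical
  have hIcc : (Finset.Icc 1 n).card = n := by rw [Nat.card_Icc]; omega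
  have hAle : A.card ≤ n.choose a := by
    calc A.card ≤ (powersetCard a (Finset.Icc 1 n)).card := card_le_card hA
      _ = n.choose a := by rw [card_powersetCard, hIcc]
  rcases Nat.eq_zero_or_pos B.card with hB0 | hBpos
  · exact ⟨by omega, fun h => absurd hB0 h⟩
  · set k := n - b with hk
    have hbn : b ≤ n := by omega
    have hBIcc : ∀ Y ∈ B, Y ⊆ Finset.Icc 1 n ∧ Y.card = b := fun Y hY =>
      mem_powersetCard.1 (hB hY)
    set 𝒢 := B.image (fun Y => Finset.Icc 1 n \ Y) with hGdef
    have hGprop : ∀ X ∈ 𝒢, X ⊆ Finset.Icc 1 n ∧ X.card = k := by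
      intro X hX
      obtain ⟨Y, hY, rfl⟩ := mem_image.1 hX
      refine ⟨sdiff_subset, ?_⟩
      rw [card_sdiff_of_subset (hBIcc Y hY).1, hIcc, (hBIcc Y hY).2]
    have hGcard : 𝒢.card = B.card := by
      rw [hGdef]
      apply card_image_of_injOn
      intro Y₁ hY₁ Y₂ hY₂ hY
      dsimp only at hY
      have e1 : Finset.Icc 1 n \ (Finset.Icc 1 n \ Y₁) = Y₁ := by
        rw [Finset.sdiff_sdiff_self_left, Finset.inter_eq_right.2 (hBIcc Y₁ hY₁).1]
      have e2 : Finset.Icc 1 n \ (Finset.Icc 1 n \ Y₂) = Y₂ := by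
        rw [Finset.sdiff_sdiff_self_left, Finset.inter_eq_right.2 (hBIcc Y₂ hY₂).1]
      rw [← e1, ← e2, hY]
    have hGne : 𝒢.Nonempty := by
      rw [← card_pos, hGcard]; omega
    have hak : a < k := by omega
    set t := k - a with ht
    have hgrow : 𝒢.card < ((Finset.shadow)^[t] 𝒢).card := by
      rcases hcond with hba | ⟨hab, hcard⟩
      · refine shadow_grow (Finset.Icc 1 n) k a hak (by rw [hIcc]; omega) ?_ 𝒢 hGprop hGne
        rw [hIcc]
        have h1 : n.choose k = n.choose b := by
          rw [hk, Nat.choose_symm hbn]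
        rw [h1]
        exact choose_lt_choose_of n a b hba hn
      · refine core2N n k a ha hak (by omega) 𝒢 hGprop hGne ?_
        rw [hGcard]
        have h1 : n - b - 1 + a = k + a - 1 := by omega
        have h2 : (k + a - 1).choose (a - 1) = (k + a - 1).choose k := by
          have h3 : k + a - 1 - k = a - 1 := by omega
          have := Nat.choose_symm (show k ≤ k + a - 1 by omega)
          rw [h3] at this
          exact this
        rw [h1, h2] at hcard
        exact hcard
    set D := (Finset.shadow)^[t] 𝒢 with hD
    have hDprop : ∀ S ∈ D, S ⊆ Finset.Icc 1 n ∧ S.card = a := by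
      intro S hS
      have := sizedIn_shadow_iterate (Finset.Icc 1 n) k t 𝒢 hGprop S hS
      refine ⟨this.1, ?_⟩
      rw [this.2]; omega
    have hDsub : D ⊆ powersetCard a (Finset.Icc 1 n) := fun S hS =>
      mem_powersetCard.2 (hDprop S hS)
    have hdisj : Disjoint A D := by
      rw [Finset.disjoint_left]
      intro S hSA hSD
      obtain ⟨C, hC, hSC, hCS⟩ := Finset.mem_shadow_iterate_iff_exists_sdiff.1 hSD
      obtain ⟨Y, hY, rfl⟩ := mem_image.1 hC
      obtain ⟨x, hx⟩ := hcross S hSA Y hY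
      rw [Finset.mem_inter] at hx
      exact (Finset.mem_sdiff.1 (hSC hx.1)).2 hx.2
    have hunion : A.card + D.card ≤ n.choose a := by
      calc A.card + D.card = (A ∪ D).card := (card_union_of_disjoint hdisj).symm
        _ ≤ (powersetCard a (Finset.Icc 1 n)).card := card_le_card (union_subset hA hDsub)
        _ = n.choose a := by rw [card_powersetCard, hIcc]
    constructor <;> omega
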